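/- arXiv:1212.3940 — 2 statements merged into one kernel-verified Lean document; each statement's English description precedes it below -/
import Mathlib

section
/- Let G be a simple connected 4-regular vertex-transitive triangle-free graph of odd order, and let H be a vertex subset of G with |H| > 3 and |V(G) \ H| ≥ 4 such that both the subgraph induced by H and the subgraph induced by V(G) \ H are connected, and the number of edges with exactly one end in H equals 8. Then every vertex v of G is incident with at most 2 edges having exactly one end in H. -/
open SimpleGraph

/-- The set of edges of `G` with exactly one end in `S`. -/
def edgeBoundary {V : Type*} (G : SimpleGraph V) (S : Set V) : Set (Sym2 V) :=
  {e | e ∈ G.edgeSet ∧ ∃ x ∈ S, ∃ y ∉ S, e = s(x, y)}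

open Finset

namespace AtMostTwo

variable {V : Type*} [Fintype V] [DecidableEq V] (G : SimpleGraph V) [DecidableRel G.Adj]

/-- ordered crossing pairs -/
def cutP (S : Finset V) : Finset (V × V) :=
  Finset.univ.filter (fun p => G.Adj p.1 p.2 ∧ p.1 ∈ S ∧ p.2 ∉ S)

def dcut (S : Finset V) : ℕ := (cutP G S).card

variable {G}

lemma mem_cutP {S : Finset V} {p : V × V} :
    p ∈ cutP G S ↔ G.Adj p.1 p.2 ∧ p.1 ∈ S ∧ p.2 ∉ S := by
  simp [cutP]

lemma dcut_compl (S : Finset V) : dcut G Sᶜ = dcut G S := by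
  unfold dcut
  refine Finset.card_nbij' (fun p => (p.2, p.1)) (fun p => (p.2, p.1)) ?_ ?_ ?_ ?_
  · intro p hp
    rw [Finset.mem_coe, mem_cutP] at hp ⊢
    simp only [Finset.mem_compl, not_not] at hp ⊢
    exact ⟨hp.1.symm, by tauto, by tauto⟩
  · intro p hp
    rw [Finset.mem_coe, mem_cutP] at hp ⊢
    simp only [Finset.mem_compl, not_not] at hp ⊢
    exact ⟨hp.1.symm, by tauto, by tauto⟩
  · intro p _; rfl
  · intro p _; rfl

lemma dcut_submod (A B : Finset V) :
    dcut G (A ∩ B) + dcut G (A ∪ B) ≤ dcut G A + dcut G B := by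
  unfold dcut cutP
  rw [Finset.card_filter, Finset.card_filter, Finset.card_filter, Finset.card_filter,
    ← Finset.sum_add_distrib, ← Finset.sum_add_distrib]
  apply Finset.sum_le_sum
  intro p _
  by_cases h1 : p.1 ∈ A <;> by_cases h2 : p.1 ∈ B <;> by_cases h3 : p.2 ∈ A <;>
    by_cases h4 : p.2 ∈ B <;> by_cases h5 : G.Adj p.1 p.2 <;>
    simp [h1, h2, h3, h4, h5]

lemma dcut_posimod (A B : Finset V) :
    dcut G (A \ B) + dcut G (B \ A) ≤ dcut G A + dcut G B := by
  have h := dcut_submod (G := G) A Bᶜ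
  rw [dcut_compl] at h
  have e1 : A ∩ Bᶜ = A \ B := by ext x; simp [Finset.mem_sdiff, and_comm]
  have e2 : (A ∪ Bᶜ)ᶜ = B \ A := by ext x; simp [Finset.mem_sdiff, and_comm, not_or]
  calc dcut G (A \ B) + dcut G (B \ A) = dcut G (A ∩ Bᶜ) + dcut G (A ∪ Bᶜ) := by
        rw [e1, ← e2, dcut_compl]
      _ ≤ dcut G A + dcut G B := h


variable (G)

/-- ordered internal pairs -/
def inP (S : Finset V) : Finset (V × V) :=
  Finset.univ.filter (fun p => G.Adj p.1 p.2 ∧ p.1 ∈ S ∧ p.2 ∈ S)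

def odeg (S : Finset V) (v : V) : ℕ :=
  (Finset.univ.filter (fun y => G.Adj v y ∧ y ∉ S)).card

def ideg (S : Finset V) (v : V) : ℕ :=
  (Finset.univ.filter (fun y => G.Adj v y ∧ y ∈ S)).card

/-- The graph of internal edges of `S`. -/
def insideGraph (S : Finset V) : SimpleGraph V where
  Adj x y := G.Adj x y ∧ x ∈ S ∧ y ∈ S
  symm := ⟨by rintro x y ⟨h, a, b⟩; exact ⟨h.symm, b, a⟩⟩
  loopless := ⟨by rintro x ⟨h, _, _⟩; exact G.irrefl h⟩

instance (S : Finset V) : DecidableRel (insideGraph G S).Adj := fun x y =>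
  inferInstanceAs (Decidable (G.Adj x y ∧ x ∈ S ∧ y ∈ S))

variable {G}

lemma even_inP_card (S : Finset V) : Even (inP G S).card := by
  have h := SimpleGraph.two_mul_card_edgeFinset (G := insideGraph G S)
  have he : (inP G S).card = 2 * (insideGraph G S).edgeFinset.card := by
    rw [h]; rfl
  exact ⟨_, by rw [he]; ring⟩

lemma ideg_add_odeg (hreg : ∀ v : V, (G.neighborSet v).ncard = 4) (S : Finset V) (v : V) :
    ideg G S v + odeg G S v = 4 := by
  unfold ideg odeg
  have h4 : (Finset.univ.filter (fun y => G.Adj v y)).card = 4 := by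
    have := hreg v
    rw [Set.ncard_eq_toFinset_card'] at this
    rw [← this]
    congr 1
    ext y
    simp
  rw [← h4, ← Finset.filter_filter, ← Finset.filter_filter]
  exact Finset.card_filter_add_card_filter_not (fun y => y ∈ S)

lemma cutP_fiber (S : Finset V) (v : V) (hv : v ∈ S) :
    ((cutP G S).filter (fun p => p.1 = v)).card = odeg G S v := by
  refine Finset.card_nbij' (fun p => p.2) (fun y => (v, y)) ?_ ?_ ?_ ?_
  · intro p hp
    simp only [Finset.mem_coe, Finset.mem_filter, mem_cutP] at hp
    simp only [Finset.mem_coe, Finset.mem_filter, Finset.mem_univ, true_and]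
    obtain ⟨⟨ha, _, h2⟩, h1⟩ := hp
    rw [h1] at ha
    exact ⟨ha, h2⟩
  · intro y hy
    simp only [Finset.mem_coe, Finset.mem_filter, Finset.mem_univ, true_and] at hy
    simp only [Finset.mem_coe, Finset.mem_filter, mem_cutP]
    exact ⟨⟨hy.1, hv, hy.2⟩, trivial⟩
  · intro p hp
    simp only [Finset.mem_coe, Finset.mem_filter] at hp
    rw [← hp.2]
  · intro y _; rfl

lemma dcut_eq_sum_odeg (S : Finset V) : dcut G S = ∑ v ∈ S, odeg G S v := by
  unfold dcut
  rw [Finset.card_eq_sum_card_fiberwise (f := Prod.fst) (t := S)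
    (fun p hp => (mem_cutP.mp hp).2.1)]
  exact Finset.sum_congr rfl (fun v hv => cutP_fiber S v hv)

lemma inP_fiber_fst (S : Finset V) (v : V) (hv : v ∈ S) :
    ((inP G S).filter (fun p => p.1 = v)).card = ideg G S v := by
  refine Finset.card_nbij' (fun p => p.2) (fun y => (v, y)) ?_ ?_ ?_ ?_
  · intro p hp
    simp only [Finset.mem_coe, inP, Finset.mem_filter, Finset.mem_univ, true_and] at hp ⊢
    obtain ⟨⟨ha, _, h2⟩, h1⟩ := hp
    rw [h1] at ha
    exact ⟨ha, h2⟩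
  · intro y hy
    simp only [Finset.mem_coe, inP, Finset.mem_filter, Finset.mem_univ, true_and] at hy ⊢
    exact ⟨⟨hy.1, hv, hy.2⟩, trivial⟩
  · intro p hp
    simp only [Finset.mem_coe, Finset.mem_filter] at hp
    rw [← hp.2]
  · intro y _; rfl

lemma inP_fiber_snd (S : Finset V) (v : V) (hv : v ∈ S) :
    ((inP G S).filter (fun p => p.2 = v)).card = ideg G S v := by
  refine Finset.card_nbij' (fun p => p.1) (fun y => (y, v)) ?_ ?_ ?_ ?_
  · intro p hp
    simp only [Finset.mem_coe, inP, Finset.mem_filter, Finset.mem_univ, true_and] at hp ⊢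
    obtain ⟨⟨ha, h1, _⟩, h2⟩ := hp
    rw [h2] at ha
    exact ⟨ha.symm, h1⟩
  · intro y hy
    simp only [Finset.mem_coe, inP, Finset.mem_filter, Finset.mem_univ, true_and] at hy ⊢
    exact ⟨⟨hy.1.symm, hy.2, hv⟩, trivial⟩
  · intro p hp
    simp only [Finset.mem_coe, Finset.mem_filter] at hp
    rw [← hp.2]
  · intro y _; rfl

lemma inP_card_eq_sum_ideg (S : Finset V) : (inP G S).card = ∑ v ∈ S, ideg G S v := by
  rw [Finset.card_eq_sum_card_fiberwise (f := Prod.fst) (t := S)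
    (fun p hp => by simpa [inP] using (Finset.mem_filter.mp hp).2.2.1)]
  exact Finset.sum_congr rfl (fun v hv => inP_fiber_fst S v hv)

lemma handshake (hreg : ∀ v : V, (G.neighborSet v).ncard = 4) (S : Finset V) :
    (inP G S).card + dcut G S = 4 * S.card := by
  rw [inP_card_eq_sum_ideg, dcut_eq_sum_odeg, ← Finset.sum_add_distrib]
  rw [Finset.sum_congr rfl (fun v _ => ideg_add_odeg hreg S v), Finset.sum_const]
  ring

lemma dcut_even (hreg : ∀ v : V, (G.neighborSet v).ncard = 4) (S : Finset V) :
    Even (dcut G S) := by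
  have h := handshake hreg S
  obtain ⟨k, hk⟩ := even_inP_card (G := G) S
  exact ⟨2 * S.card - k, by omega⟩


lemma ideg_add_ideg_le (htf : G.CliqueFree 3) {x y : V} (hxy : G.Adj x y) (S : Finset V) :
    ideg G S x + ideg G S y ≤ S.card := by
  set A := Finset.univ.filter (fun z => G.Adj x z ∧ z ∈ S) with hA
  set B := Finset.univ.filter (fun z => G.Adj y z ∧ z ∈ S) with hB
  have hdisj : Disjoint A B := by
    rw [Finset.disjoint_left]
    intro z hzA hzB
    simp only [hA, hB, Finset.mem_filter, Finset.mem_univ, true_and] at hzA hzB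
    exact htf {x, y, z} (SimpleGraph.is3Clique_triple_iff.mpr ⟨hxy, hzA.1, hzB.1⟩)
  have hsub : A ∪ B ⊆ S := by
    intro z hz
    rcases Finset.mem_union.mp hz with h | h <;>
      simp only [hA, hB, Finset.mem_filter, Finset.mem_univ, true_and] at h <;> exact h.2
  calc ideg G S x + ideg G S y = (A ∪ B).card := (Finset.card_union_of_disjoint hdisj).symm
    _ ≤ S.card := Finset.card_le_card hsub

lemma sum_ideg_sq_le (htf : G.CliqueFree 3) (S : Finset V) :
    2 * ∑ v ∈ S, (ideg G S v) ^ 2 ≤ S.card * (inP G S).card := by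
  have key : ∀ p ∈ inP G S, ideg G S p.1 + ideg G S p.2 ≤ S.card := by
    intro p hp
    simp only [inP, Finset.mem_filter, Finset.mem_univ, true_and] at hp
    exact ideg_add_ideg_le htf hp.1 S
  have hfst : ∑ p ∈ inP G S, ideg G S p.1 = ∑ v ∈ S, (ideg G S v) ^ 2 := by
    rw [← Finset.sum_fiberwise_of_maps_to (g := Prod.fst) (t := S)
      (fun p hp => by simpa [inP] using (Finset.mem_filter.mp hp).2.2.1)
      (fun p => ideg G S p.1)]
    refine Finset.sum_congr rfl fun v hv => ?_
    have hc : ∀ p ∈ (inP G S).filter (fun p => p.1 = v), ideg G S p.1 = ideg G S v :=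
      fun p hp => by rw [(Finset.mem_filter.mp hp).2]
    rw [Finset.sum_congr rfl hc, Finset.sum_const, inP_fiber_fst S v hv, smul_eq_mul, sq]
  have hsnd : ∑ p ∈ inP G S, ideg G S p.2 = ∑ v ∈ S, (ideg G S v) ^ 2 := by
    rw [← Finset.sum_fiberwise_of_maps_to (g := Prod.snd) (t := S)
      (fun p hp => by simpa [inP] using (Finset.mem_filter.mp hp).2.2.2)
      (fun p => ideg G S p.2)]
    refine Finset.sum_congr rfl fun v hv => ?_
    have hc : ∀ p ∈ (inP G S).filter (fun p => p.2 = v), ideg G S p.2 = ideg G S v :=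
      fun p hp => by rw [(Finset.mem_filter.mp hp).2]
    rw [Finset.sum_congr rfl hc, Finset.sum_const, inP_fiber_snd S v hv, smul_eq_mul, sq]
  calc 2 * ∑ v ∈ S, (ideg G S v) ^ 2
      = ∑ p ∈ inP G S, ideg G S p.1 + ∑ p ∈ inP G S, ideg G S p.2 := by
        rw [hfst, hsnd]; ring
    _ = ∑ p ∈ inP G S, (ideg G S p.1 + ideg G S p.2) := (Finset.sum_add_distrib).symm
    _ ≤ ∑ _p ∈ inP G S, S.card := Finset.sum_le_sum key
    _ = (inP G S).card * S.card := by rw [Finset.sum_const, smul_eq_mul]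
    _ = S.card * (inP G S).card := mul_comm _ _

lemma cauchy_ideg (S : Finset V) :
    ((inP G S).card) ^ 2 ≤ S.card * ∑ v ∈ S, (ideg G S v) ^ 2 := by
  have h := sq_sum_le_card_mul_sum_sq (s := S) (f := fun v => ((ideg G S v : ℤ)))
  rw [inP_card_eq_sum_ideg]
  exact_mod_cast h

/-- Mantel-type bound: `2 * |inP S| ≤ |S|^2`. -/
lemma two_mul_inP_le (htf : G.CliqueFree 3) (S : Finset V) :
    2 * (inP G S).card ≤ S.card ^ 2 := by
  rcases Nat.eq_zero_or_pos (inP G S).card with h0 | hpos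
  · rw [h0]; positivity
  have h1 := sum_ideg_sq_le htf S
  have h2 := cauchy_ideg (G := G) S
  have := calc 2 * ((inP G S).card ^ 2)
      ≤ 2 * (S.card * ∑ v ∈ S, (ideg G S v) ^ 2) := by omega
    _ = S.card * (2 * ∑ v ∈ S, (ideg G S v) ^ 2) := by ring
    _ ≤ S.card * (S.card * (inP G S).card) := Nat.mul_le_mul_left _ h1
    _ = S.card ^ 2 * (inP G S).card := by ring
  have h3 : 2 * (inP G S).card * (inP G S).card ≤ S.card ^ 2 * (inP G S).card := by
    calc 2 * (inP G S).card * (inP G S).card = 2 * ((inP G S).card ^ 2) := by ring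
      _ ≤ S.card ^ 2 * (inP G S).card := this
  exact Nat.le_of_mul_le_mul_right h3 hpos

/-- Master inequality: `8|S| ≤ |S|² + 2 d(S)` for triangle-free 4-regular graphs. -/
lemma master (hreg : ∀ v : V, (G.neighborSet v).ncard = 4) (htf : G.CliqueFree 3)
    (S : Finset V) : 8 * S.card ≤ S.card ^ 2 + 2 * dcut G S := by
  have h1 := handshake hreg S
  have h2 := two_mul_inP_le htf S
  omega

lemma mem_image_equiv_iff (φ : G ≃g G) (S : Finset V) (a : V) :
    φ a ∈ S.image (φ : V → V) ↔ a ∈ S := by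
  rw [Finset.mem_image]
  constructor
  · rintro ⟨b, hb, hba⟩
    rwa [← φ.injective hba]
  · intro ha; exact ⟨a, ha, rfl⟩

lemma dcut_image (φ : G ≃g G) (S : Finset V) :
    dcut G (S.image (φ : V → V)) = dcut G S := by
  unfold dcut
  refine (Finset.card_nbij' (fun p => (φ.symm p.1, φ.symm p.2))
    (fun p => (φ p.1, φ p.2)) ?_ ?_ ?_ ?_)
  · intro p hp
    rw [Finset.mem_coe, mem_cutP] at hp ⊢
    refine ⟨?_, ?_, ?_⟩
    · have := hp.1
      rw [← φ.map_adj_iff]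
      simpa using this
    · have h1 := hp.2.1
      have : φ (φ.symm p.1) ∈ S.image (φ : V → V) := by simpa using h1
      rwa [mem_image_equiv_iff] at this
    · intro hc
      exact hp.2.2 (by simpa using (mem_image_equiv_iff φ S (φ.symm p.2)).mpr hc)
  · intro p hp
    rw [Finset.mem_coe, mem_cutP] at hp ⊢
    refine ⟨?_, ?_, ?_⟩
    · rw [φ.map_adj_iff]; exact hp.1
    · exact (mem_image_equiv_iff φ S p.1).mpr hp.2.1
    · intro hc
      exact hp.2.2 ((mem_image_equiv_iff φ S p.2).mp hc)
  · intro p _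
    simp
  · intro p _
    simp

lemma odeg_stab (φ : G ≃g G) {A : Finset V} (hA : A.image (φ : V → V) = A) (v : V) :
    odeg G A (φ v) = odeg G A v := by
  have hmem : ∀ a : V, φ a ∈ A ↔ a ∈ A := by
    intro a
    conv_lhs => rw [← hA]
    exact mem_image_equiv_iff φ A a
  unfold odeg
  refine (Finset.card_nbij' (fun y => φ.symm y) (fun y => φ y) ?_ ?_ ?_ ?_)
  · intro y hy
    simp only [Finset.mem_coe, Finset.mem_filter, Finset.mem_univ, true_and] at hy ⊢
    constructor
    · have := hy.1
      rw [← φ.map_adj_iff]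
      simpa using this
    · intro hc
      exact hy.2 (by simpa using (hmem (φ.symm y)).mpr hc)
  · intro y hy
    simp only [Finset.mem_coe, Finset.mem_filter, Finset.mem_univ, true_and] at hy ⊢
    constructor
    · rw [φ.map_adj_iff]; exact hy.1
    · intro hc
      exact hy.2 ((hmem y).mp hc)
  · intro y _; simp
  · intro y _; simp

lemma cutP_nonempty_of_walk {A : Finset V} :
    ∀ {x y : V}, G.Walk x y → x ∈ A → y ∉ A → (cutP G A).Nonempty := by
  intro x y w
  induction w with
  | nil => intro hx hy; exact absurd hx hy
  | @cons u b c h p ih =>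
    intro hx hy
    by_cases hb : b ∈ A
    · exact ih hb hy
    · exact ⟨(u, b), mem_cutP.mpr ⟨h, hx, hb⟩⟩

lemma one_le_dcut (hconn : G.Connected) {A : Finset V} (h1 : A.Nonempty)
    (h2 : Aᶜ.Nonempty) : 1 ≤ dcut G A := by
  obtain ⟨x, hx⟩ := h1
  obtain ⟨y, hy⟩ := h2
  rw [Finset.mem_compl] at hy
  obtain ⟨w⟩ := hconn.preconnected x y
  have := cutP_nonempty_of_walk w hx hy
  exact Finset.card_pos.mpr this

lemma ideg_le_pred {A : Finset V} {v : V} (hv : v ∈ A) : ideg G A v ≤ A.card - 1 := by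
  have hsub : Finset.univ.filter (fun y => G.Adj v y ∧ y ∈ A) ⊆ A.erase v := by
    intro y hy
    simp only [Finset.mem_filter, Finset.mem_univ, true_and] at hy
    exact Finset.mem_erase.mpr ⟨fun h => G.irrefl (v := v) (h ▸ hy.1), hy.2⟩
  calc ideg G A v ≤ (A.erase v).card := Finset.card_le_card hsub
    _ = A.card - 1 := Finset.card_erase_of_mem hv

lemma compl_nonempty_of_card {A : Finset V} {k : ℕ} (h : A.card + k ≤ Fintype.card V)
    (hk : 1 ≤ k) : Aᶜ.Nonempty := by
  rw [← Finset.card_pos, Finset.card_compl]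
  omega

/-- Minimal elements and translation claim packaged: given a complement-closed,
automorphism-closed nonempty family `P`, get a minimum-cardinality member. -/
lemma exists_atom (P : Finset V → Prop) (h : ∃ S, P S) :
    ∃ A, P A ∧ ∀ S, P S → A.card ≤ S.card := by
  classical
  obtain ⟨S0, hS0⟩ := h
  obtain ⟨A, hA, hmin⟩ := Finset.exists_min_image
    ((Finset.univ : Finset (Finset V)).filter fun S => P S) Finset.card
    ⟨S0, by simp [hS0]⟩
  refine ⟨A, by simpa using hA, fun S hS => hmin S (by simp [hS])⟩

/-- Edge connectivity at least 4. -/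
lemma lambda_ge_four (hconn : G.Connected) (hvt : ∀ x y : V, ∃ φ : G ≃g G, φ x = y)
    (hreg : ∀ v : V, (G.neighborSet v).ncard = 4) :
    ∀ S : Finset V, S.Nonempty → Sᶜ.Nonempty → 4 ≤ dcut G S := by
  classical
  by_contra hcon
  push_neg at hcon
  obtain ⟨S0, hS01, hS02, hS03⟩ := hcon
  set P : Finset V → Prop := fun S => S.Nonempty ∧ Sᶜ.Nonempty ∧ dcut G S ≤ 3 with hP
  obtain ⟨A, hPA, hmin⟩ := exists_atom P ⟨S0, hS01, hS02, by omega⟩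
  obtain ⟨hA1, hA2, hA3⟩ := hPA
  set m := A.card with hm
  -- translation claim
  have claim : ∀ φ : G ≃g G, ((A.image (φ : V → V)) ∩ A).Nonempty →
      A.image (φ : V → V) = A := by
    intro φ hne
    by_contra hBA
    set B := A.image (φ : V → V) with hB
    have hcardB : B.card = m := Finset.card_image_of_injective _ φ.injective
    have hPB : P B := by
      refine ⟨hA1.image _, ?_, by rw [hB, dcut_image]; exact hA3⟩
      rw [← Finset.card_pos, Finset.card_compl, hcardB]
      rw [← Finset.card_pos, Finset.card_compl] at hA2
      omega
    have hPne : (A \ B).Nonempty := by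
      rw [Finset.sdiff_nonempty]
      intro hsub
      exact hBA (Finset.eq_of_subset_of_card_le hsub (by omega)).symm
    have hQne : (B \ A).Nonempty := by
      rw [Finset.sdiff_nonempty]
      intro hsub
      exact hBA (Finset.eq_of_subset_of_card_le hsub (by omega))
    obtain ⟨x, hx⟩ := hne
    rw [Finset.mem_inter] at hx
    have hposi := dcut_posimod (G := G) A B
    rcases le_or_gt (dcut G (A \ B)) 3 with hc | hc
    · have hPP : P (A \ B) := by
        refine ⟨hPne, ?_, hc⟩
        refine Finset.Nonempty.mono ?_ (hPB.1)
        intro z hz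
        rw [Finset.mem_compl, Finset.mem_sdiff]
        rintro ⟨_, hzB⟩
        exact hzB hz
      have hlt : (A \ B).card < m := by
        refine Finset.card_lt_card ?_
        rw [Finset.ssubset_iff_of_subset Finset.sdiff_subset]
        exact ⟨x, hx.2, fun hc => (Finset.mem_sdiff.mp hc).2 hx.1⟩
      exact absurd (hmin _ hPP) (by omega)
    · have hc2 : dcut G (B \ A) ≤ 3 := by omega
      have hPQ : P (B \ A) := by
        refine ⟨hQne, ?_, hc2⟩
        refine Finset.Nonempty.mono ?_ hA1
        intro z hz
        rw [Finset.mem_compl, Finset.mem_sdiff]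
        rintro ⟨_, hzA⟩
        exact hzA hz
      have hlt : (B \ A).card < m := by
        have : (B \ A).card < B.card := by
          refine Finset.card_lt_card ?_
          rw [Finset.ssubset_iff_of_subset Finset.sdiff_subset]
          exact ⟨x, hx.1, fun hc => (Finset.mem_sdiff.mp hc).2 hx.2⟩
        omega
      exact absurd (hmin _ hPQ) (by omega)
  -- uniform out-degree
  obtain ⟨a0, ha0⟩ := hA1
  set t := odeg G A a0 with ht
  have huni : ∀ v ∈ A, odeg G A v = t := by
    intro v hv
    obtain ⟨φ, hφ⟩ := hvt a0 v
    have hfix : A.image (φ : V → V) = A := by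
      apply claim
      exact ⟨v, Finset.mem_inter.mpr ⟨hφ ▸ Finset.mem_image_of_mem _ ha0, hv⟩⟩
    have := odeg_stab φ hfix a0
    rw [hφ] at this
    exact this
  have hsum : dcut G A = m * t := by
    rw [dcut_eq_sum_odeg, Finset.sum_congr rfl huni, Finset.sum_const, smul_eq_mul]
  have ht1 : 1 ≤ t := by
    by_contra hc
    push_neg at hc
    interval_cases t
    · have := one_le_dcut hconn ⟨a0, ha0⟩ hA2
      omega
  have hms : 4 = ideg G A a0 + t := (ideg_add_odeg hreg A a0).symm
  have hidm : ideg G A a0 ≤ m - 1 := ideg_le_pred ha0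
  have hm1 : 1 ≤ m := Finset.card_pos.mpr ⟨a0, ha0⟩
  have hmt : m * t ≤ 3 := by omega
  have hm3 : m ≤ 3 := le_trans (Nat.le_mul_of_pos_right m ht1) hmt
  interval_cases m <;> omega

lemma arith_ge7 {s d : ℕ} (h : 8*s ≤ s^2 + 2*d) (hd : d ≤ 4) (hs : 2 ≤ s) : 7 ≤ s := by
  by_contra hc
  push_neg at hc
  have h1 : s^2 ≤ 6 * s := by rw [sq]; exact Nat.mul_le_mul_right s (by omega)
  have h2 : s ≤ 4 := by omega
  have h3 : s^2 ≤ 4 * s := by rw [sq]; exact Nat.mul_le_mul_right s h2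
  have h4 : s ≤ 2 := by omega
  have h5 : s = 2 := le_antisymm h4 hs
  subst h5
  norm_num at h
  omega

lemma arith_ge6 {s d : ℕ} (h : 8*s ≤ s^2 + 2*d) (hd : d ≤ 6) (hs : 3 ≤ s) : 6 ≤ s := by
  by_contra hc
  push_neg at hc
  have h1 : s^2 ≤ 5 * s := by rw [sq]; exact Nat.mul_le_mul_right s (by omega)
  have h2 : s ≤ 4 := by omega
  have h3 : s^2 ≤ 4 * s := by rw [sq]; exact Nat.mul_le_mul_right s h2
  have h4 : s ≤ 3 := by omega
  have h5 : s = 3 := le_antisymm h4 hs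
  subst h5
  norm_num at h
  omega

/-- If a minimal member of an automorphism-closed family cannot cross any same-size member,
then its automorphic images are equal or disjoint. -/
lemma translate_claim (P : Finset V → Prop)
    (hPiso : ∀ (φ : G ≃g G) (S : Finset V), P S → P (S.image (φ : V → V)))
    {A : Finset V} (hPA : P A) (hmin : ∀ S, P S → A.card ≤ S.card)
    (hcross : ∀ B, P B → B.card = A.card → (A ∩ B).Nonempty → (A \ B).Nonempty →
      (B \ A).Nonempty → False) :
    ∀ φ : G ≃g G, ((A.image (φ : V → V)) ∩ A).Nonempty → A.image (φ : V → V) = A := by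
  intro φ hne
  by_contra hBA
  set B := A.image (φ : V → V) with hB
  have hcardB : B.card = A.card := Finset.card_image_of_injective _ φ.injective
  have hPB : P B := hPiso φ A hPA
  have hPne : (A \ B).Nonempty := by
    rw [Finset.sdiff_nonempty]
    intro hsub
    exact hBA (Finset.eq_of_subset_of_card_le hsub (by omega)).symm
  have hQne : (B \ A).Nonempty := by
    rw [Finset.sdiff_nonempty]
    intro hsub
    exact hBA (Finset.eq_of_subset_of_card_le hsub (by omega))
  obtain ⟨x, hx⟩ := hne
  rw [Finset.mem_inter] at hx
  exact hcross B hPB hcardB ⟨x, Finset.mem_inter.mpr ⟨hx.2, hx.1⟩⟩ hPne hQne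

/-- From the no-crossing claim, all vertices of `A` have the same number of
edges leaving `A`. -/
lemma uniform_odeg (hvt : ∀ x y : V, ∃ φ : G ≃g G, φ x = y) {A : Finset V}
    {a0 : V} (ha0 : a0 ∈ A)
    (claim : ∀ φ : G ≃g G, ((A.image (φ : V → V)) ∩ A).Nonempty →
      A.image (φ : V → V) = A) :
    dcut G A = A.card * odeg G A a0 := by
  have huni : ∀ v ∈ A, odeg G A v = odeg G A a0 := by
    intro v hv
    obtain ⟨φ, hφ⟩ := hvt a0 v
    have hfix : A.image (φ : V → V) = A :=
      claim φ ⟨v, Finset.mem_inter.mpr ⟨hφ ▸ Finset.mem_image_of_mem _ ha0, hv⟩⟩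
    have := odeg_stab φ hfix a0
    rw [hφ] at this
    exact this
  rw [dcut_eq_sum_odeg, Finset.sum_congr rfl huni, Finset.sum_const, smul_eq_mul]

/-- No 4-edge-cuts other than around single vertices. -/
lemma super_lambda (hconn : G.Connected) (hvt : ∀ x y : V, ∃ φ : G ≃g G, φ x = y)
    (hreg : ∀ v : V, (G.neighborSet v).ncard = 4) (htf : G.CliqueFree 3) :
    ∀ S : Finset V, 2 ≤ S.card → 2 ≤ Sᶜ.card → 5 ≤ dcut G S := by
  classical
  by_contra hcon
  push_neg at hcon
  obtain ⟨S0, h1, h2, h3⟩ := hcon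
  set P : Finset V → Prop := fun S => 2 ≤ S.card ∧ 2 ≤ Sᶜ.card ∧ dcut G S ≤ 4 with hP
  have hlam := lambda_ge_four hconn hvt hreg
  have hsize : ∀ S, P S → 7 ≤ S.card := fun S hS =>
    arith_ge7 (master hreg htf S) hS.2.2 hS.1
  have hPcompl : ∀ S, P S → P Sᶜ := by
    intro S hS
    exact ⟨hS.2.1, by rw [compl_compl]; exact hS.1, by rw [dcut_compl]; exact hS.2.2⟩
  have hPiso : ∀ (φ : G ≃g G) (S : Finset V), P S → P (S.image (φ : V → V)) := by
    intro φ S hS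
    have hc : (S.image (φ : V → V)).card = S.card :=
      Finset.card_image_of_injective _ φ.injective
    refine ⟨by omega, ?_, by rw [dcut_image]; exact hS.2.2⟩
    rw [Finset.card_compl, hc, ← Finset.card_compl]
    exact hS.2.1
  obtain ⟨A, hPA, hmin⟩ := exists_atom P ⟨S0, h1, h2, by omega⟩
  have hm7 : 7 ≤ A.card := hsize A hPA
  have hmc7 : 7 ≤ Aᶜ.card := hsize Aᶜ (hPcompl A hPA)
  have hnA : A.card + Aᶜ.card = Fintype.card V := Finset.card_add_card_compl A
  have hcross : ∀ B, P B → B.card = A.card → (A ∩ B).Nonempty → (A \ B).Nonempty →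
      (B \ A).Nonempty → False := by
    intro B hPB hcardB hXne hPne hQne
    have hc1 : (A \ B).card + (A ∩ B).card = A.card := Finset.card_sdiff_add_card_inter A B
    have hc2 : (B \ A).card + (B ∩ A).card = B.card := Finset.card_sdiff_add_card_inter B A
    have hBA : (B ∩ A).card = (A ∩ B).card := by rw [Finset.inter_comm]
    have hPpos : 1 ≤ (A \ B).card := Finset.card_pos.mpr hPne
    have hQpos : 1 ≤ (B \ A).card := Finset.card_pos.mpr hQne
    have hXpos : 1 ≤ (A ∩ B).card := Finset.card_pos.mpr hXne
    have hposi := dcut_posimod (G := G) A B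
    rcases le_or_gt ((A ∩ B).card) (A.card - 2) with hc | hc
    · -- both difference sides have ≥ 2 vertices
      have hcompP : 2 ≤ (A \ B)ᶜ.card := by
        have hsub : B ⊆ (A \ B)ᶜ := by
          intro z hz
          rw [Finset.mem_compl, Finset.mem_sdiff]
          rintro ⟨_, hzB⟩; exact hzB hz
        have := Finset.card_le_card hsub
        omega
      have hcompQ : 2 ≤ (B \ A)ᶜ.card := by
        have hsub : A ⊆ (B \ A)ᶜ := by
          intro z hz
          rw [Finset.mem_compl, Finset.mem_sdiff]
          rintro ⟨_, hzA⟩; exact hzA hz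
        have := Finset.card_le_card hsub
        omega
      rcases le_or_gt (dcut G (A \ B)) 4 with hd | hd
      · have : P (A \ B) := ⟨by omega, hcompP, hd⟩
        have := hmin _ this
        omega
      · have : P (B \ A) := ⟨by omega, hcompQ, by omega⟩
        have := hmin _ this
        omega
    · -- |A ∩ B| = |A| - 1
      have hXcard : (A ∩ B).card = A.card - 1 := by omega
      have hY : (A ∪ B).card + (A ∩ B).card = A.card + B.card :=
        Finset.card_union_add_card_inter A B
      have hYcard : (A ∪ B).card = A.card + 1 := by omega
      have hYcne : (A ∪ B)ᶜ.Nonempty := by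
        rw [← Finset.card_pos, Finset.card_compl]
        omega
      have hYne : (A ∪ B).Nonempty := by
        rw [← Finset.card_pos]
        omega
      have hdY : 4 ≤ dcut G (A ∪ B) := hlam _ hYne hYcne
      have hsub := dcut_submod (G := G) A B
      have hdX : dcut G (A ∩ B) ≤ 4 := by omega
      have hXcompl : 2 ≤ (A ∩ B)ᶜ.card := by
        have hsub2 : Aᶜ ⊆ (A ∩ B)ᶜ := by
          intro z hz
          rw [Finset.mem_compl] at hz ⊢
          intro hzz
          exact hz (Finset.mem_inter.mp hzz).1
        have := Finset.card_le_card hsub2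
        omega
      have : P (A ∩ B) := ⟨by omega, hXcompl, hdX⟩
      have := hmin _ this
      omega
  have claim := translate_claim P hPiso hPA hmin hcross
  obtain ⟨a0, ha0⟩ : A.Nonempty := Finset.card_pos.mp (by omega)
  have hsum := uniform_odeg hvt ha0 claim
  have hd4 : dcut G A = 4 := by
    have := hlam A (Finset.card_pos.mp (by omega)) (Finset.card_pos.mp (by omega))
    omega
  rw [hd4] at hsum
  rcases Nat.eq_zero_or_pos (odeg G A a0) with h0 | hpos
  · rw [h0] at hsum; omega
  · have := Nat.le_mul_of_pos_right A.card hpos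
    omega

/-- The main structural lemma: no 6-edge-cuts with at least 3 vertices on each side. -/
lemma no_six_cut (hconn : G.Connected) (hvt : ∀ x y : V, ∃ φ : G ≃g G, φ x = y)
    (hreg : ∀ v : V, (G.neighborSet v).ncard = 4) (htf : G.CliqueFree 3)
    (hodd : Odd (Fintype.card V)) :
    ∀ S : Finset V, 3 ≤ S.card → 3 ≤ Sᶜ.card → 7 ≤ dcut G S := by
  classical
  by_contra hcon
  push_neg at hcon
  obtain ⟨S0, h1, h2, h3⟩ := hcon
  set P : Finset V → Prop := fun S => 3 ≤ S.card ∧ 3 ≤ Sᶜ.card ∧ dcut G S ≤ 6 with hP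
  have hlam := lambda_ge_four hconn hvt hreg
  have hsup := super_lambda hconn hvt hreg htf
  have hsize : ∀ S, P S → 6 ≤ S.card := fun S hS =>
    arith_ge6 (master hreg htf S) hS.2.2 hS.1
  have hPcompl : ∀ S, P S → P Sᶜ := by
    intro S hS
    exact ⟨hS.2.1, by rw [compl_compl]; exact hS.1, by rw [dcut_compl]; exact hS.2.2⟩
  have hPiso : ∀ (φ : G ≃g G) (S : Finset V), P S → P (S.image (φ : V → V)) := by
    intro φ S hS
    have hc : (S.image (φ : V → V)).card = S.card :=
      Finset.card_image_of_injective _ φ.injective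
    refine ⟨by omega, ?_, by rw [dcut_image]; exact hS.2.2⟩
    rw [Finset.card_compl, hc, ← Finset.card_compl]
    exact hS.2.1
  obtain ⟨A, hPA, hmin⟩ := exists_atom P ⟨S0, h1, h2, by omega⟩
  have hm6 : 6 ≤ A.card := hsize A hPA
  have hmc6 : 6 ≤ Aᶜ.card := hsize Aᶜ (hPcompl A hPA)
  have hnA : A.card + Aᶜ.card = Fintype.card V := Finset.card_add_card_compl A
  have hcross : ∀ B, P B → B.card = A.card → (A ∩ B).Nonempty → (A \ B).Nonempty →
      (B \ A).Nonempty → False := by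
    intro B hPB hcardB hXne hPne hQne
    have hc1 : (A \ B).card + (A ∩ B).card = A.card := Finset.card_sdiff_add_card_inter A B
    have hc2 : (B \ A).card + (B ∩ A).card = B.card := Finset.card_sdiff_add_card_inter B A
    have hBA : (B ∩ A).card = (A ∩ B).card := by rw [Finset.inter_comm]
    have hPpos : 1 ≤ (A \ B).card := Finset.card_pos.mpr hPne
    have hQpos : 1 ≤ (B \ A).card := Finset.card_pos.mpr hQne
    have hXpos : 1 ≤ (A ∩ B).card := Finset.card_pos.mpr hXne
    have hposi := dcut_posimod (G := G) A B
    rcases le_or_gt ((A ∩ B).card) (A.card - 3) with hc | hc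
    · -- both difference sides have ≥ 3 vertices
      have hcompP : 3 ≤ (A \ B)ᶜ.card := by
        have hsub : B ⊆ (A \ B)ᶜ := by
          intro z hz
          rw [Finset.mem_compl, Finset.mem_sdiff]
          rintro ⟨_, hzB⟩; exact hzB hz
        have := Finset.card_le_card hsub
        omega
      have hcompQ : 3 ≤ (B \ A)ᶜ.card := by
        have hsub : A ⊆ (B \ A)ᶜ := by
          intro z hz
          rw [Finset.mem_compl, Finset.mem_sdiff]
          rintro ⟨_, hzA⟩; exact hzA hz
        have := Finset.card_le_card hsub
        omega
      rcases le_or_gt (dcut G (A \ B)) 6 with hd | hd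
      · have : P (A \ B) := ⟨by omega, hcompP, hd⟩
        have := hmin _ this
        omega
      · have : P (B \ A) := ⟨by omega, hcompQ, by omega⟩
        have := hmin _ this
        omega
    · -- |A ∩ B| ≥ |A| - 2
      have hY : (A ∪ B).card + (A ∩ B).card = A.card + B.card :=
        Finset.card_union_add_card_inter A B
      have hYcard : (A ∪ B).card ≤ A.card + 2 := by omega
      have hYc2 : 2 ≤ (A ∪ B)ᶜ.card := by
        rw [Finset.card_compl]
        omega
      have hY2 : 2 ≤ (A ∪ B).card := by omega
      have hdY5 : 5 ≤ dcut G (A ∪ B) := hsup _ hY2 hYc2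
      have hdYeven : Even (dcut G (A ∪ B)) := dcut_even hreg _
      have hdY6 : 6 ≤ dcut G (A ∪ B) := by
        obtain ⟨k, hk⟩ := hdYeven
        omega
      have hsub := dcut_submod (G := G) A B
      have hdX : dcut G (A ∩ B) ≤ 6 := by omega
      have hXcompl : 3 ≤ (A ∩ B)ᶜ.card := by
        have hsub2 : Aᶜ ⊆ (A ∩ B)ᶜ := by
          intro z hz
          rw [Finset.mem_compl] at hz ⊢
          intro hzz
          exact hz (Finset.mem_inter.mp hzz).1
        have := Finset.card_le_card hsub2
        omega
      have : P (A ∩ B) := ⟨by omega, hXcompl, hdX⟩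
      have := hmin _ this
      omega
  have claim := translate_claim P hPiso hPA hmin hcross
  obtain ⟨a0, ha0⟩ : A.Nonempty := Finset.card_pos.mp (by omega)
  have hsum := uniform_odeg hvt ha0 claim
  -- conclude |A| = 6
  have ht1 : 1 ≤ odeg G A a0 := by
    rcases Nat.eq_zero_or_pos (odeg G A a0) with h0 | hpos
    · exfalso
      have := one_le_dcut hconn ⟨a0, ha0⟩ (Finset.card_pos.mp (by omega) : Aᶜ.Nonempty)
      rw [hsum, h0] at this
      omega
    · exact hpos
  have hA6 : A.card = 6 := by
    have h1 : A.card * 1 ≤ A.card * odeg G A a0 := Nat.mul_le_mul_left _ ht1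
    have h2 : dcut G A ≤ 6 := hPA.2.2
    omega
  -- blocks: automorphic images of A are equal or disjoint and cover V, so 6 ∣ |V|
  have htrans : ∀ σ τ : G ≃g G, ((A.image (σ : V → V)) ∩ (A.image (τ : V → V))).Nonempty →
      A.image (σ : V → V) = A.image (τ : V → V) := by
    intro σ τ hne
    obtain ⟨x, hx⟩ := hne
    rw [Finset.mem_inter] at hx
    obtain ⟨a, ha, hax⟩ := Finset.mem_image.mp hx.1
    obtain ⟨b, hb, hbx⟩ := Finset.mem_image.mp hx.2
    set ψ : G ≃g G := τ.trans σ.symm with hψ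
    have hψb : ψ b = a := by
      have : σ.symm x = a := by rw [← hax]; simp
      rw [← this, hψ]
      simp [hbx]
    have hha : (A.image (ψ : V → V) ∩ A).Nonempty :=
      ⟨a, Finset.mem_inter.mpr ⟨hψb ▸ Finset.mem_image_of_mem _ hb, ha⟩⟩
    have heq := claim ψ hha
    have : (A.image (ψ : V → V)).image (σ : V → V) = A.image (σ : V → V) := by rw [heq]
    rw [Finset.image_image] at this
    rw [← this]
    congr 1
    funext y
    simp [hψ]
  set f : V → Finset V := fun v => A.image ((Classical.choose (hvt a0 v) : G ≃g G) : V → V)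
    with hf
  have hvmem : ∀ v : V, v ∈ f v := by
    intro v
    have hspec := Classical.choose_spec (hvt a0 v)
    have hm : (Classical.choose (hvt a0 v)) a0 ∈ f v := Finset.mem_image_of_mem _ ha0
    rwa [hspec] at hm
  have hblocks : ∀ v w : V, (f v ∩ f w).Nonempty → f v = f w := by
    intro v w hne
    exact htrans _ _ hne
  have hfib : ∀ b ∈ Finset.univ.image f, (Finset.univ.filter (fun w => f w = b)).card = 6 := by
    intro b hb
    obtain ⟨v, _, rfl⟩ := Finset.mem_image.mp hb
    have hfil : Finset.univ.filter (fun w => f w = f v) = f v := by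
      ext w
      simp only [Finset.mem_filter, Finset.mem_univ, true_and]
      constructor
      · intro h
        rw [← h]
        exact hvmem w
      · intro hw
        exact hblocks w v ⟨w, Finset.mem_inter.mpr ⟨hvmem w, hw⟩⟩
    rw [hfil, hf]
    rw [Finset.card_image_of_injective _ (RelIso.injective _)]
    exact hA6
  have hcardV : Fintype.card V = (Finset.univ.image f).card * 6 := by
    rw [← Finset.card_univ]
    rw [Finset.card_eq_sum_card_fiberwise
      (fun x _ => Finset.mem_image_of_mem f (Finset.mem_univ x))]
    rw [Finset.sum_congr rfl hfib, Finset.sum_const, smul_eq_mul]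
  rw [Nat.odd_iff] at hodd
  omega

lemma edgeBoundary_eq_image {H : Set V} {Hf : Finset V} (hHf : ∀ x, x ∈ Hf ↔ x ∈ H) :
    edgeBoundary G H = ↑((cutP G Hf).image (fun p => s(p.1, p.2))) := by
  ext e
  simp only [edgeBoundary, Set.mem_setOf_eq, Finset.coe_image, Set.mem_image,
    Finset.mem_coe]
  constructor
  · rintro ⟨he, x, hx, y, hy, rfl⟩
    refine ⟨(x, y), mem_cutP.mpr ⟨?_, (hHf x).mpr hx, fun hc => hy ((hHf y).mp hc)⟩, rfl⟩
    rwa [SimpleGraph.mem_edgeSet] at he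
  · rintro ⟨p, hp, rfl⟩
    rw [mem_cutP] at hp
    refine ⟨G.mem_edgeSet.mpr hp.1, p.1, (hHf p.1).mp hp.2.1, p.2,
      fun hc => hp.2.2 ((hHf p.2).mpr hc), rfl⟩

lemma ncard_edgeBoundary_eq_dcut {H : Set V} {Hf : Finset V}
    (hHf : ∀ x, x ∈ Hf ↔ x ∈ H) :
    (edgeBoundary G H).ncard = dcut G Hf := by
  rw [edgeBoundary_eq_image hHf, Set.ncard_coe_finset]
  unfold dcut
  apply Finset.card_image_of_injOn
  intro p hp q hq heq
  rw [Finset.mem_coe, mem_cutP] at hp hq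
  rw [Sym2.eq_iff] at heq
  rcases heq with ⟨h1, h2⟩ | ⟨h1, h2⟩
  · exact Prod.ext h1 h2
  · exfalso
    exact hq.2.2 (h1 ▸ hp.2.1)

lemma edgeBoundary_compl (H : Set V) : edgeBoundary G Hᶜ = edgeBoundary G H := by
  ext e
  simp only [edgeBoundary, Set.mem_setOf_eq]
  constructor
  · rintro ⟨he, x, hx, y, hy, rfl⟩
    refine ⟨he, y, ?_, x, ?_, Sym2.eq_swap⟩
    · simpa using hy
    · simpa using hx
  · rintro ⟨he, x, hx, y, hy, rfl⟩
    refine ⟨he, y, ?_, x, ?_, Sym2.eq_swap⟩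
    · simpa using hy
    · simpa using hx

lemma incidence_inter_boundary {H : Set V} {Hf : Finset V}
    (hHf : ∀ x, x ∈ Hf ↔ x ∈ H) {v : V} (hv : v ∈ H) :
    (G.incidenceSet v ∩ edgeBoundary G H).ncard = odeg G Hf v := by
  have hset : G.incidenceSet v ∩ edgeBoundary G H =
      ↑((Finset.univ.filter (fun y => G.Adj v y ∧ y ∉ Hf)).image (fun y => s(v, y))) := by
    ext e
    simp only [Set.mem_inter_iff, SimpleGraph.incidenceSet, edgeBoundary,
      Set.mem_setOf_eq, Finset.coe_image, Set.mem_image, Finset.mem_coe,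
      Finset.mem_filter, Finset.mem_univ, true_and, Set.mem_sep_iff]
    constructor
    · rintro ⟨⟨he, hve⟩, _, x, hx, y, hy, rfl⟩
      rw [SimpleGraph.mem_edgeSet] at he
      rcases Sym2.mem_iff.mp hve with rfl | rfl
      · exact ⟨y, ⟨he, fun hc => hy ((hHf y).mp hc)⟩, rfl⟩
      · exact absurd hv hy
    · rintro ⟨y, ⟨hadj, hy⟩, rfl⟩
      refine ⟨⟨G.mem_edgeSet.mpr hadj, Sym2.mem_iff.mpr (Or.inl rfl)⟩,
        G.mem_edgeSet.mpr hadj, v, hv, y, fun hc => hy ((hHf y).mpr hc), rfl⟩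
  rw [hset, Set.ncard_coe_finset]
  unfold odeg
  apply Finset.card_image_of_injOn
  intro a ha b hb heq
  rw [Sym2.eq_iff] at heq
  rcases heq with ⟨_, h⟩ | ⟨h1, h2⟩
  · exact h
  · exfalso
    subst h2
    rw [Finset.mem_coe, Finset.mem_filter] at ha
    exact G.irrefl ha.2.1

/-- Key lemma in Finset form. -/
lemma main_key (hconn : G.Connected) (hvt : ∀ x y : V, ∃ φ : G ≃g G, φ x = y)
    (hreg : ∀ v : V, (G.neighborSet v).ncard = 4) (htf : G.CliqueFree 3)
    (hodd : Odd (Fintype.card V)) {Hf : Finset V} (h1 : 4 ≤ Hf.card)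
    (h2 : 4 ≤ Hfᶜ.card) (hd : dcut G Hf = 8) {v : V} (hv : v ∈ Hf) :
    odeg G Hf v ≤ 2 := by
  by_contra hcon
  push_neg at hcon
  set k := odeg G Hf v with hk
  have hk4 : k ≤ 4 := by
    have := ideg_add_odeg hreg Hf v
    omega
  set S := Hf.erase v with hS
  have hodegS : ∀ x ∈ S, odeg G S x = odeg G Hf x + (if G.Adj x v then 1 else 0) := by
    intro x hx
    rw [Finset.mem_erase] at hx
    unfold odeg
    have hsplit : (Finset.univ.filter (fun y => G.Adj x y ∧ y ∉ S)) =
        (Finset.univ.filter (fun y => G.Adj x y ∧ y ∉ Hf)) ∪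
        (Finset.univ.filter (fun y => G.Adj x y ∧ y = v)) := by
      ext y
      simp only [Finset.mem_union, Finset.mem_filter, Finset.mem_univ, true_and, hS,
        Finset.mem_erase, not_and, not_not]
      constructor
      · rintro ⟨ha, hy⟩
        by_cases hyv : y = v
        · exact Or.inr ⟨ha, hyv⟩
        · exact Or.inl ⟨ha, fun hc => (hy (fun h => hyv h) : y ∉ Hf) hc⟩
      · rintro (⟨ha, hy⟩ | ⟨ha, rfl⟩)
        · exact ⟨ha, fun h hc => absurd hc hy⟩
        · exact ⟨ha, fun h => absurd rfl h⟩
    have hdisj : Disjoint (Finset.univ.filter (fun y => G.Adj x y ∧ y ∉ Hf))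
        (Finset.univ.filter (fun y => G.Adj x y ∧ y = v)) := by
      rw [Finset.disjoint_left]
      rintro y hy1 hy2
      simp only [Finset.mem_filter, Finset.mem_univ, true_and] at hy1 hy2
      exact hy1.2 (hy2.2 ▸ hv)
    rw [hsplit, Finset.card_union_of_disjoint hdisj]
    congr 1
    by_cases hadj : G.Adj x v
    · rw [if_pos hadj, Finset.card_eq_one]
      refine ⟨v, ?_⟩
      ext y
      simp only [Finset.mem_filter, Finset.mem_univ, true_and, Finset.mem_singleton]
      constructor
      · rintro ⟨_, rfl⟩; rfl
      · rintro rfl; exact ⟨hadj, rfl⟩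
    · rw [if_neg hadj, Finset.card_eq_zero]
      ext y
      simp only [Finset.mem_filter, Finset.mem_univ, true_and, Finset.notMem_empty,
        iff_false, not_and]
      rintro ha rfl
      exact hadj ha
  have hsum1 : ∑ x ∈ S, odeg G Hf x + k = dcut G Hf := by
    rw [dcut_eq_sum_odeg, hS, hk]
    exact Finset.sum_erase_add Hf _ hv
  have hsum2 : ∑ x ∈ S, (if G.Adj x v then 1 else 0) = 4 - k := by
    rw [Finset.sum_boole]
    have heq : S.filter (fun x => G.Adj x v) =
        Finset.univ.filter (fun y => G.Adj v y ∧ y ∈ Hf) := by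
      ext x
      simp only [Finset.mem_filter, Finset.mem_univ, true_and, hS, Finset.mem_erase]
      constructor
      · rintro ⟨⟨hxv, hxH⟩, ha⟩
        exact ⟨ha.symm, hxH⟩
      · rintro ⟨ha, hxH⟩
        exact ⟨⟨fun hc => G.irrefl (hc ▸ ha), hxH⟩, ha.symm⟩
    rw [heq]
    have hio := ideg_add_odeg hreg Hf v
    unfold ideg at hio
    push_cast
    omega
  have hdS : dcut G S = (8 - k) + (4 - k) := by
    rw [dcut_eq_sum_odeg, Finset.sum_congr rfl hodegS, Finset.sum_add_distrib, hsum2]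
    omega
  have hcard : S.card = Hf.card - 1 := Finset.card_erase_of_mem hv
  have hcardc : Sᶜ.card = Hfᶜ.card + 1 := by
    rw [Finset.card_compl, Finset.card_compl, hcard]
    have : Hf.card ≤ Fintype.card V := Finset.card_le_card (Finset.subset_univ Hf)
    omega
  have h7 := no_six_cut hconn hvt hreg htf hodd S (by omega) (by omega)
  omega

end AtMostTwo

open AtMostTwo in
/-- Let `G` be a connected 4-regular vertex-transitive triangle-free odd graph, and `H` a
vertex subset with `|H| > 3` and `|V \ H| ≥ 4` inducing a connected subgraph whose complement
also induces a connected subgraph, with `d(H) = 8`. Then every vertex is incident with at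
most 2 edges of `∇(H)`. -/
theorem at_most_two_boundary_edges {V : Type*} [Fintype V] (G : SimpleGraph V)
    (hconn : G.Connected)
    (hvt : ∀ x y : V, ∃ φ : G ≃g G, φ x = y)
    (hreg : ∀ v : V, (G.neighborSet v).ncard = 4)
    (htf : G.CliqueFree 3)
    (hodd : Odd (Fintype.card V))
    (H : Set V)
    (hH : 3 < H.ncard)
    (hHc : 4 ≤ Hᶜ.ncard)
    (hHconn : (G.induce H).Connected)
    (hHcconn : (G.induce Hᶜ).Connected)
    (hd : (edgeBoundary G H).ncard = 8) :
    ∀ v : V, (G.incidenceSet v ∩ edgeBoundary G H).ncard ≤ 2 := by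
  classical
  intro v
  set Hf : Finset V := Finset.univ.filter (fun x => x ∈ H) with hHfdef
  have hHf : ∀ x, x ∈ Hf ↔ x ∈ H := by intro x; simp [hHfdef]
  have hHfc : ∀ x, x ∈ Hfᶜ ↔ x ∈ Hᶜ := by intro x; simp [hHfdef]
  have hncard : H.ncard = Hf.card := by
    rw [Set.ncard_eq_toFinset_card' H]
    congr 1
    ext x
    simp [hHfdef]
  have hncardc : Hᶜ.ncard = Hfᶜ.card := by
    rw [Set.ncard_eq_toFinset_card' Hᶜ]
    congr 1
    ext x
    simp [hHfdef]
  have h4 : 4 ≤ Hf.card := by omega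
  have h4c : 4 ≤ Hfᶜ.card := by omega
  have hd' : dcut G Hf = 8 := by
    rw [← ncard_edgeBoundary_eq_dcut hHf]
    exact hd
  by_cases hvH : v ∈ H
  · rw [incidence_inter_boundary hHf hvH]
    exact main_key hconn hvt hreg htf hodd h4 h4c hd' ((hHf v).mpr hvH)
  · have hvHc : v ∈ Hᶜ := hvH
    rw [← edgeBoundary_compl (G := G) H, incidence_inter_boundary hHfc hvHc]
    refine main_key hconn hvt hreg htf hodd h4c ?_ ?_ ((hHfc v).mpr hvHc)
    · rw [compl_compl]
      exact h4
    · rw [dcut_compl]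
      exact hd'
end

section
/- Let G be a simple connected 4-regular vertex-transitive graph of odd order. Then there do not exist three pairwise distinct vertices x, y, z of G with N(x) = N(y) = N(z). -/
open SimpleGraph

/-- A connected 4-regular vertex-transitive odd graph has no three pairwise distinct vertices
`x`, `y`, `z` with `N(x) = N(y) = N(z)`. -/
theorem no_triple_twins {V : Type*} [Fintype V] (G : SimpleGraph V)
    (hconn : G.Connected)
    (hvt : ∀ x y : V, ∃ φ : G ≃g G, φ x = y)
    (hreg : ∀ v : V, (G.neighborSet v).ncard = 4)
    (hodd : Odd (Fintype.card V)) :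
    ¬ ∃ x y z : V, x ≠ y ∧ x ≠ z ∧ y ≠ z ∧
      G.neighborSet x = G.neighborSet y ∧ G.neighborSet y = G.neighborSet z := by
  classical
  rintro ⟨x, y, z, hxy, hxz, hyz, hNxy, hNyz⟩
  -- automorphisms preserve twin relation
  have key : ∀ (φ : G ≃g G) (u v : V), G.neighborSet u = G.neighborSet v →
      G.neighborSet (φ u) = G.neighborSet (φ v) := by
    intro φ u v h
    ext a
    have h1 : a ∈ G.neighborSet (φ u) ↔ φ.symm a ∈ G.neighborSet u := by
      conv_lhs => rw [show a = φ (φ.symm a) by simp]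
      exact φ.apply_mem_neighborSet_iff
    have h2 : a ∈ G.neighborSet (φ v) ↔ φ.symm a ∈ G.neighborSet v := by
      conv_lhs => rw [show a = φ (φ.symm a) by simp]
      exact φ.apply_mem_neighborSet_iff
    rw [h1, h2, h]
  set D : V → Set V := fun n => {w | G.neighborSet w = G.neighborSet n} with hD
  -- all classes have the same size
  have hcard : ∀ n : V, (D n).ncard = (D x).ncard := by
    intro n
    obtain ⟨φ, hφ⟩ := hvt x n
    have himg : D n = φ '' D x := by
      ext w
      constructor
      · intro hw
        refine ⟨φ.symm w, ?_, by simp⟩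
        have : G.neighborSet (φ.symm w) = G.neighborSet (φ.symm (φ x)) :=
          key φ.symm w (φ x) (by rw [hφ]; exact hw)
        exact (by simpa using this : G.neighborSet (φ.symm w) = G.neighborSet x)
      · rintro ⟨u, hu, rfl⟩
        have := key φ u x hu
        rw [hφ] at this
        exact this
    rw [himg, Set.ncard_image_of_injective _ φ.injective]
  have h3 : 3 ≤ (D x).ncard := by
    have hsub : ({x, y, z} : Set V) ⊆ D x := by
      intro w hw
      rcases hw with rfl | rfl | rfl
      · rfl
      · exact hNxy.symm
      · exact (hNxy.trans hNyz).symm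
    have : ({x, y, z} : Set V).ncard = 3 := by
      rw [Set.ncard_insert_of_notMem (by simp [hxy, hxz]) (Set.toFinite _),
        Set.ncard_insert_of_notMem (by simp [hyz]) (Set.toFinite _), Set.ncard_singleton]
    rw [← this]
    exact Set.ncard_le_ncard hsub (Set.toFinite _)
  -- class of a neighbor of x is inside N(x)
  have hclass_sub : ∀ n ∈ G.neighborSet x, D n ⊆ G.neighborSet x := by
    intro n hn w hw
    have hxn : x ∈ G.neighborSet n :=
      (G.mem_neighborSet n x).mpr ((G.mem_neighborSet x n).mp hn).symm
    rw [← hw] at hxn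
    exact (G.mem_neighborSet x w).mpr ((G.mem_neighborSet w x).mp hxn).symm
  -- pick a neighbor of x
  have hne : (G.neighborSet x).Nonempty := by
    rw [← Set.ncard_pos (Set.toFinite _)] at *
    rw [hreg x]; norm_num
  obtain ⟨n, hn⟩ := hne
  have h4 : (D x).ncard ≤ 4 := by
    rw [← hcard n, ← hreg x]
    exact Set.ncard_le_ncard (hclass_sub n hn) (Set.toFinite _)
  interval_cases h : (D x).ncard
  · -- size 3 case
    have hdn : (D n).ncard = 3 := hcard n
    have hdiff : (G.neighborSet x \ D n).Nonempty := by
      rw [← Set.ncard_pos (Set.toFinite _), Set.ncard_diff (hclass_sub n hn) (Set.toFinite _),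
        hreg x, hdn]
      norm_num
    obtain ⟨m, hm⟩ := hdiff
    have hm1 : m ∈ G.neighborSet x := hm.1
    have hdm : (D m).ncard = 3 := hcard m
    have hdisj : Disjoint (D n) (D m) := by
      rw [Set.disjoint_left]
      intro w hwn hwm
      exact hm.2 (by rw [hD]; simp only [Set.mem_setOf_eq] at *; rw [← hwm, hwn])
    have hun : (D n ∪ D m) ⊆ G.neighborSet x :=
      Set.union_subset (hclass_sub n hn) (hclass_sub m hm1)
    have : (D n ∪ D m).ncard ≤ 4 := by
      rw [← hreg x]; exact Set.ncard_le_ncard hun (Set.toFinite _)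
    rw [Set.ncard_union_eq hdisj (Set.toFinite _) (Set.toFinite _), hdn, hdm] at this
    omega
  · -- size 4 case
    have hNeq : ∀ m ∈ G.neighborSet x, G.neighborSet m = D x := by
      intro m hm
      have hsub : D x ⊆ G.neighborSet m := by
        intro w hw
        have : m ∈ G.neighborSet w := by rw [hw]; exact hm
        exact (G.mem_neighborSet m w).mpr ((G.mem_neighborSet w m).mp this).symm
      exact (Set.eq_of_subset_of_ncard_le hsub (by rw [hreg m, h]) (Set.toFinite _)).symm
    set S : Set V := D x ∪ G.neighborSet x with hS
    have hclosed : ∀ a ∈ S, ∀ b, G.Adj a b → b ∈ S := by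
      intro a ha b hab
      rcases ha with ha | ha
      · right
        have : b ∈ G.neighborSet a := (G.mem_neighborSet a b).mpr hab
        rwa [ha] at this
      · left
        have : b ∈ G.neighborSet a := (G.mem_neighborSet a b).mpr hab
        rwa [hNeq a ha] at this
    have hwalk : ∀ {u v : V} (p : G.Walk u v), u ∈ S → v ∈ S := by
      intro u v p
      induction p with
      | nil => exact id
      | cons hadj _ ih => exact fun hu => ih (hclosed _ hu _ hadj)
    have hall : ∀ v : V, v ∈ S := fun v =>
      (hconn.preconnected x v).elim fun p => hwalk p (Or.inl rfl)
    have hdisj : Disjoint (D x) (G.neighborSet x) := by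
      rw [Set.disjoint_left]
      intro w hw hw'
      have : w ∈ G.neighborSet w := by rw [hw]; exact hw'
      exact G.loopless.irrefl w this
    have hScard : S.ncard = 8 := by
      rw [hS, Set.ncard_union_eq hdisj (Set.toFinite _) (Set.toFinite _), h, hreg x]
    have hU : S = Set.univ := Set.eq_univ_of_forall hall
    rw [hU, Set.ncard_univ, Nat.card_eq_fintype_card] at hScard
    rw [hScard, Nat.odd_iff] at hodd
    omega
end
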